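/- Let u ∈ ℂⁿ have i.i.d. entries uniformly distributed on the complex unit circle, let w ∈ ℂⁿ be fixed, and let t > 0. Then P(|⟨u,w⟩| ≥ t) ≤ 4 exp(−t²/(4‖w‖₂²)). -/

import Mathlib

open MeasureTheory ProbabilityTheory Complex

/-- The uniform probability distribution on the complex unit circle. -/
noncomputable def uniformCircle : Measure ℂ :=
  Measure.map (fun θ : ℝ => Complex.exp (2 * Real.pi * θ * Complex.I))
    (volume.restrict (Set.Ico (0 : ℝ) 1))

lemma circleMap_measurable : Measurable (fun θ : ℝ => Complex.exp (2 * Real.pi * θ * Complex.I)) := by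
  measurability

lemma norm_circleMap (θ : ℝ) : ‖Complex.exp (2 * Real.pi * θ * Complex.I)‖ = 1 := by
  simp [Complex.norm_exp]

lemma circleMap_periodic (f : ℂ → ℝ) :
    Function.Periodic (fun θ : ℝ => f (Complex.exp (2 * Real.pi * θ * Complex.I))) 1 := by
  intro θ
  simp only []
  congr 1
  push_cast
  rw [show (2 * Real.pi * ((θ:ℝ)+1) * Complex.I : ℂ) = 2 * Real.pi * θ * Complex.I + 2 * Real.pi * Complex.I by push_cast; ring,
    Complex.exp_add, Complex.exp_two_pi_mul_I, mul_one]

lemma circleMap_half (θ : ℝ) :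
    Complex.exp (2 * Real.pi * (θ + 1/2) * Complex.I) = - Complex.exp (2 * Real.pi * θ * Complex.I) := by
  have : (2 * Real.pi * (θ + 1/2) * Complex.I : ℂ) = 2 * Real.pi * θ * Complex.I + Real.pi * Complex.I := by
    push_cast [Complex.ofReal_div]; ring
  rw [this, Complex.exp_add, Complex.exp_pi_mul_I, mul_neg_one]

lemma integral_symm (c : ℂ) (s : ℝ) :
    (∫ θ in (0:ℝ)..1, Real.exp (s * ((starRingEnd ℂ) c * Complex.exp (2 * Real.pi * θ * Complex.I)).re))
    = ∫ θ in (0:ℝ)..1, Real.exp (-(s * ((starRingEnd ℂ) c * Complex.exp (2 * Real.pi * θ * Complex.I)).re)) := by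
  set g : ℝ → ℝ := fun θ => Real.exp (s * ((starRingEnd ℂ) c * Complex.exp (2 * Real.pi * θ * Complex.I)).re) with hg
  have hper : Function.Periodic g 1 :=
    circleMap_periodic (fun z => Real.exp (s * ((starRingEnd ℂ) c * z).re))
  have h1 : (∫ θ in (0:ℝ)..1, g θ) = ∫ θ in (1/2:ℝ)..(3/2), g θ := by
    have := hper.intervalIntegral_add_eq 0 (1/2)
    norm_num at this
    convert this using 2 <;> norm_num
  have h2 : (∫ θ in (1/2:ℝ)..(3/2), g θ) = ∫ θ in (0:ℝ)..1, g (θ + 1/2) := by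
    rw [intervalIntegral.integral_comp_add_right g (1/2)]
    norm_num
  rw [h1, h2]
  apply intervalIntegral.integral_congr
  intro θ _
  simp only [hg]
  have : Complex.exp (2 * Real.pi * ((θ : ℝ) + 1/2) * Complex.I)
      = - Complex.exp (2 * Real.pi * θ * Complex.I) := circleMap_half θ
  push_cast
  rw [this, mul_neg, Complex.neg_re, mul_neg]

instance : IsProbabilityMeasure uniformCircle := by
  unfold uniformCircle
  have : IsProbabilityMeasure (volume.restrict (Set.Ico (0:ℝ) 1)) := by
    constructor
    simp [Real.volume_Ico]
  exact Measure.isProbabilityMeasure_map circleMap_measurable.aemeasurable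

lemma ae_norm_one {Ω : Type*} [MeasurableSpace Ω] (μ : Measure Ω)
    (X : Ω → ℂ) (hX : Measurable X) (hd : μ.map X = uniformCircle) :
    ∀ᵐ ω ∂μ, ‖X ω‖ = 1 := by
  have hset : MeasurableSet {z : ℂ | ‖z‖ ≠ 1} := (measurableSet_eq_fun measurable_norm measurable_const).compl
  have h0 : uniformCircle {z : ℂ | ‖z‖ ≠ 1} = 0 := by
    unfold uniformCircle
    rw [Measure.map_apply circleMap_measurable hset]
    have hpre : (fun θ : ℝ => Complex.exp (2 * Real.pi * θ * Complex.I)) ⁻¹' {z : ℂ | ‖z‖ ≠ 1} = ∅ := by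
      ext θ
      simp only [Set.mem_preimage, Set.mem_setOf_eq, Set.mem_empty_iff_false, iff_false, not_not]
      exact norm_circleMap θ
    rw [hpre]
    simp
  have : μ {ω | ‖X ω‖ ≠ 1} = 0 := by
    have := Measure.map_apply hX hset (μ := μ)
    rw [hd, h0] at this
    exact this.symm
  filter_upwards [measure_eq_zero_iff_ae_notMem.mp this] with ω hω
  simpa using hω

lemma re_conj_bound (c z : ℂ) (hz : ‖z‖ = 1) : |((starRingEnd ℂ) c * z).re| ≤ ‖c‖ := by
  calc |((starRingEnd ℂ) c * z).re| ≤ ‖(starRingEnd ℂ) c * z‖ := Complex.abs_re_le_norm _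
    _ = ‖c‖ * ‖z‖ := by rw [norm_mul]; simp
    _ = ‖c‖ := by rw [hz, mul_one]

lemma integrable_exp_re {Ω : Type*} [MeasurableSpace Ω] (μ : Measure Ω) [IsProbabilityMeasure μ]
    (X : Ω → ℂ) (hX : Measurable X) (hd : μ.map X = uniformCircle) (c : ℂ) (s : ℝ) :
    Integrable (fun ω => Real.exp (s * ((starRingEnd ℂ) c * X ω).re)) μ := by
  apply Integrable.mono' (integrable_const (Real.exp (|s| * ‖c‖)))
  · exact ((measurable_const.mul ((Complex.measurable_re.comp (measurable_const.mul hX)))).exp).aestronglyMeasurable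
  · filter_upwards [ae_norm_one μ X hX hd] with ω hω
    rw [Real.norm_eq_abs, Real.abs_exp, Real.exp_le_exp]
    calc s * ((starRingEnd ℂ) c * X ω).re ≤ |s * ((starRingEnd ℂ) c * X ω).re| := le_abs_self _
      _ = |s| * |((starRingEnd ℂ) c * X ω).re| := abs_mul _ _
      _ ≤ |s| * ‖c‖ := by
          have := re_conj_bound c (X ω) hω
          exact mul_le_mul_of_nonneg_left this (abs_nonneg s)

lemma g_continuous (c : ℂ) (s : ℝ) :
    Continuous (fun θ : ℝ => Real.exp (s * ((starRingEnd ℂ) c * Complex.exp (2 * Real.pi * θ * Complex.I)).re)) := by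
  fun_prop

lemma mgf_single {Ω : Type*} [MeasurableSpace Ω] (μ : Measure Ω) [IsProbabilityMeasure μ]
    (X : Ω → ℂ) (hX : Measurable X) (hd : μ.map X = uniformCircle) (c : ℂ) (s : ℝ) :
    mgf (fun ω => ((starRingEnd ℂ) c * X ω).re) μ s ≤ Real.exp (s^2 * ‖c‖^2 / 2) := by
  set g : ℝ → ℝ := fun θ => Real.exp (s * ((starRingEnd ℂ) c * Complex.exp (2 * Real.pi * θ * Complex.I)).re) with hgdef
  set gneg : ℝ → ℝ := fun θ => Real.exp (-(s * ((starRingEnd ℂ) c * Complex.exp (2 * Real.pi * θ * Complex.I)).re)) with hgnegdef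
  have hF : Measurable (fun z : ℂ => Real.exp (s * ((starRingEnd ℂ) c * z).re)) := by fun_prop
  have hmgf : mgf (fun ω => ((starRingEnd ℂ) c * X ω).re) μ s = ∫ θ in (0:ℝ)..1, g θ := by
    rw [mgf]
    rw [← integral_map hX.aemeasurable hF.aestronglyMeasurable, hd]
    unfold uniformCircle
    rw [integral_map circleMap_measurable.aemeasurable hF.aestronglyMeasurable]
    rw [intervalIntegral.integral_of_le (zero_le_one)]
    rw [MeasureTheory.integral_Ico_eq_integral_Ioo, MeasureTheory.integral_Ioc_eq_integral_Ioo]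
  have hIg : IntervalIntegrable g volume 0 1 := (g_continuous c s).intervalIntegrable 0 1
  have hgnegcont : Continuous gneg := by rw [hgnegdef]; fun_prop
  have hIgneg : IntervalIntegrable gneg volume 0 1 := hgnegcont.intervalIntegrable 0 1
  have hsym : (∫ θ in (0:ℝ)..1, g θ) = ∫ θ in (0:ℝ)..1, gneg θ := integral_symm c s
  have hsumle : (∫ θ in (0:ℝ)..1, (g θ + gneg θ)) ≤ ∫ θ in (0:ℝ)..1, (2 * Real.exp (s^2 * ‖c‖^2 / 2)) := by
    apply intervalIntegral.integral_mono_on zero_le_one (hIg.add hIgneg) intervalIntegrable_const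
    intro θ _
    have hb : |((starRingEnd ℂ) c * Complex.exp (2 * Real.pi * θ * Complex.I)).re| ≤ ‖c‖ :=
      re_conj_bound c _ (norm_circleMap θ)
    set y : ℝ := s * ((starRingEnd ℂ) c * Complex.exp (2 * Real.pi * θ * Complex.I)).re with hy
    have : g θ + gneg θ = 2 * Real.cosh y := by
      simp only [hgdef, hgnegdef, Real.cosh_eq]
      ring
    rw [this]
    have h1 : Real.cosh y ≤ Real.exp (y^2 / 2) := Real.cosh_le_exp_half_sq y
    have h2 : y^2 / 2 ≤ s^2 * ‖c‖^2 / 2 := by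
      have : y^2 ≤ s^2 * ‖c‖^2 := by
        rw [hy, mul_pow]
        have := sq_le_sq' (neg_le_of_abs_le hb) (le_of_abs_le hb)
        nlinarith [sq_nonneg s]
      linarith
    have := h1.trans (Real.exp_le_exp.mpr h2)
    linarith
  rw [hmgf]
  have hsum : (∫ θ in (0:ℝ)..1, (g θ + gneg θ)) = (∫ θ in (0:ℝ)..1, g θ) + ∫ θ in (0:ℝ)..1, gneg θ :=
    intervalIntegral.integral_add hIg hIgneg
  have hconst : (∫ θ in (0:ℝ)..1, (2 * Real.exp (s^2 * ‖c‖^2 / 2))) = 2 * Real.exp (s^2 * ‖c‖^2 / 2) := by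
    simp
  rw [hsum, ← hsym, hconst] at hsumle
  linarith

lemma one_sided (n : ℕ) {Ω : Type*} [MeasurableSpace Ω]
    (μ : Measure Ω) [IsProbabilityMeasure μ]
    (u : Fin n → Ω → ℂ) (hmeas : ∀ j, Measurable (u j))
    (hindep : iIndepFun u μ)
    (hdist : ∀ j, μ.map (u j) = uniformCircle)
    (v : Fin n → ℂ) (ε : ℝ) (hε : 0 < ε) (hσ : 0 < ∑ j, ‖v j‖^2) :
    μ {ω | ε ≤ ∑ j, ((starRingEnd ℂ) (v j) * u j ω).re} ≤
      ENNReal.ofReal (Real.exp (-(ε^2) / (2 * ∑ j, ‖v j‖^2))) := by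
  set σ2 : ℝ := ∑ j, ‖v j‖^2 with hσ2
  set s : ℝ := ε / σ2 with hs
  have hs0 : 0 < s := div_pos hε hσ
  set X : Fin n → Ω → ℝ := fun j ω => ((starRingEnd ℂ) (v j) * u j ω).re with hXdef
  have hXmeas : ∀ j, Measurable (X j) := fun j =>
    Complex.measurable_re.comp (measurable_const.mul (hmeas j))
  have hXindep : iIndepFun X μ :=
    hindep.comp (fun j => fun z => ((starRingEnd ℂ) (v j) * z).re) (fun j => by fun_prop)
  have hintj : ∀ j, Integrable (fun ω => Real.exp (s * X j ω)) μ := fun j =>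
    integrable_exp_re μ (u j) (hmeas j) (hdist j) (v j) s
  have hint : Integrable (fun ω => Real.exp (s * (∑ j, X j) ω)) μ :=
    hXindep.integrable_exp_mul_sum hXmeas (fun j _ => hintj j)
  have hchernoff := measure_ge_le_exp_mul_mgf (μ := μ) (X := ∑ j, X j) ε hs0.le hint
  have hmgf : mgf (∑ j, X j) μ s ≤ Real.exp (s^2 * σ2 / 2) := by
    rw [hXindep.mgf_sum hXmeas]
    calc ∏ j, mgf (X j) μ s
        ≤ ∏ j, Real.exp (s^2 * ‖v j‖^2 / 2) :=
          Finset.prod_le_prod (fun j _ => mgf_nonneg)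
            (fun j _ => mgf_single μ (u j) (hmeas j) (hdist j) (v j) s)
      _ = Real.exp (∑ j, s^2 * ‖v j‖^2 / 2) := (Real.exp_sum _ _).symm
      _ = Real.exp (s^2 * σ2 / 2) := by
          congr 1
          rw [hσ2, Finset.mul_sum, Finset.sum_div]
  have hexp : Real.exp (-s * ε) * Real.exp (s^2 * σ2 / 2) = Real.exp (-(ε^2) / (2 * σ2)) := by
    rw [← Real.exp_add]
    congr 1
    rw [hs]
    field_simp
    ring
  have hfinal : (μ {ω | ε ≤ (∑ j, X j) ω}).toReal ≤ Real.exp (-(ε^2) / (2 * σ2)) := by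
    calc (μ {ω | ε ≤ (∑ j, X j) ω}).toReal
        ≤ Real.exp (-s * ε) * mgf (∑ j, X j) μ s := hchernoff
      _ ≤ Real.exp (-s * ε) * Real.exp (s^2 * σ2 / 2) := by
          exact mul_le_mul_of_nonneg_left hmgf (Real.exp_nonneg _)
      _ = Real.exp (-(ε^2) / (2 * σ2)) := hexp
  have hset : {ω | ε ≤ ∑ j, ((starRingEnd ℂ) (v j) * u j ω).re} = {ω | ε ≤ (∑ j, X j) ω} := by
    ext ω; simp [hXdef, Finset.sum_apply]
  rw [hset]
  rw [← ENNReal.ofReal_toReal (measure_ne_top μ _)]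
  exact ENNReal.ofReal_le_ofReal hfinal

/-- Complex Hoeffding inequality: if the entries of `u` are i.i.d. uniform on the complex
unit circle, then `P(|⟨u,w⟩| ≥ t) ≤ 4 exp(−t²/(4‖w‖₂²))`. -/
theorem complex_hoeffding (n : ℕ) {Ω : Type*} [MeasureSpace Ω]
    (μ : Measure Ω) [IsProbabilityMeasure μ]
    (u : Fin n → Ω → ℂ) (hmeas : ∀ j, Measurable (u j))
    (hindep : iIndepFun u μ)
    (hdist : ∀ j, μ.map (u j) = uniformCircle)
    (w : Fin n → ℂ) (hw : w ≠ 0) (t : ℝ) (ht : 0 < t) :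
    μ {ω | t ≤ ‖∑ j, (starRingEnd ℂ) (w j) * u j ω‖} ≤
      ENNReal.ofReal (4 * Real.exp (-(t ^ 2) / (4 * ∑ j, ‖w j‖ ^ 2))) := by
  classical
  set σ2 : ℝ := ∑ j, ‖w j‖^2 with hσ2
  have hσ : 0 < σ2 := by
    obtain ⟨j, hj⟩ := Function.ne_iff.mp hw
    exact Finset.sum_pos' (fun i _ => sq_nonneg _)
      ⟨j, Finset.mem_univ j, pow_pos (norm_pos_iff.mpr hj) 2⟩
  set ε : ℝ := t / Real.sqrt 2 with hεdef
  have h2pos : (0:ℝ) < Real.sqrt 2 := Real.sqrt_pos.mpr (by norm_num)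
  have hε : 0 < ε := div_pos ht h2pos
  have hε2 : ε^2 = t^2 / 2 := by
    rw [hεdef, div_pow, Real.sq_sqrt (by norm_num : (0:ℝ) ≤ 2)]
  have key : ∀ v : Fin n → ℂ, (∀ j, ‖v j‖ = ‖w j‖) →
      μ {ω | ε ≤ ∑ j, ((starRingEnd ℂ) (v j) * u j ω).re} ≤
        ENNReal.ofReal (Real.exp (-(t^2) / (4 * σ2))) := by
    intro v hv
    have hsum : ∑ j, ‖v j‖^2 = σ2 := by
      rw [hσ2]; exact Finset.sum_congr rfl (fun j _ => by rw [hv j])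
    have h := one_sided n μ u hmeas hindep hdist v ε hε (by rw [hsum]; exact hσ)
    rw [hsum] at h
    refine h.trans (le_of_eq ?_)
    congr 1
    rw [hε2]
    ring_nf
  have hsub : {ω | t ≤ ‖∑ j, (starRingEnd ℂ) (w j) * u j ω‖} ⊆
      {ω | ε ≤ ∑ j, ((starRingEnd ℂ) (w j) * u j ω).re} ∪
      {ω | ε ≤ ∑ j, ((starRingEnd ℂ) (-(w j)) * u j ω).re} ∪
      {ω | ε ≤ ∑ j, ((starRingEnd ℂ) (Complex.I * w j) * u j ω).re} ∪
      {ω | ε ≤ ∑ j, ((starRingEnd ℂ) (-(Complex.I * w j)) * u j ω).re} := by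
    intro ω hω
    simp only [Set.mem_setOf_eq] at hω
    set z : ℂ := ∑ j, (starRingEnd ℂ) (w j) * u j ω with hz
    have h1 : ∑ j, ((starRingEnd ℂ) (w j) * u j ω).re = z.re := by
      rw [hz, Complex.re_sum]
    have h2 : ∑ j, ((starRingEnd ℂ) (-(w j)) * u j ω).re = -z.re := by
      rw [hz, Complex.re_sum, ← Finset.sum_neg_distrib]
      exact Finset.sum_congr rfl (fun j _ => by simp)
    have h3 : ∑ j, ((starRingEnd ℂ) (Complex.I * w j) * u j ω).re = z.im := by
      rw [hz, Complex.im_sum]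
      refine Finset.sum_congr rfl (fun j _ => ?_)
      simp [Complex.mul_re, Complex.mul_im]
      ring
    have h4 : ∑ j, ((starRingEnd ℂ) (-(Complex.I * w j)) * u j ω).re = -z.im := by
      rw [hz, Complex.im_sum, ← Finset.sum_neg_distrib]
      refine Finset.sum_congr rfl (fun j _ => ?_)
      simp [Complex.mul_re, Complex.mul_im]
      ring
    have hz2 : t^2 ≤ z.re^2 + z.im^2 := by
      have h' : t^2 ≤ ‖z‖^2 := by nlinarith [norm_nonneg z]
      rwa [Complex.sq_norm, Complex.normSq_apply, ← pow_two, ← pow_two] at h'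
    simp only [Set.mem_union, Set.mem_setOf_eq, h1, h2, h3, h4]
    by_contra hcon
    push_neg at hcon
    obtain ⟨⟨⟨ha, hb⟩, hc⟩, hd⟩ := hcon
    have hre : z.re^2 < ε^2 := by nlinarith
    have him : z.im^2 < ε^2 := by nlinarith
    linarith
  set E0 : ENNReal := ENNReal.ofReal (Real.exp (-(t^2) / (4 * σ2))) with hE0
  have k1 := key w (fun j => rfl)
  have k2 := key (fun j => -(w j)) (fun j => norm_neg _)
  have k3 := key (fun j => Complex.I * w j) (fun j => by
    rw [norm_mul, Complex.norm_I, one_mul])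
  have k4 := key (fun j => -(Complex.I * w j)) (fun j => by
    rw [norm_neg, norm_mul, Complex.norm_I, one_mul])
  calc μ {ω | t ≤ ‖∑ j, (starRingEnd ℂ) (w j) * u j ω‖}
      ≤ μ ({ω | ε ≤ ∑ j, ((starRingEnd ℂ) (w j) * u j ω).re} ∪
          {ω | ε ≤ ∑ j, ((starRingEnd ℂ) (-(w j)) * u j ω).re} ∪
          {ω | ε ≤ ∑ j, ((starRingEnd ℂ) (Complex.I * w j) * u j ω).re} ∪
          {ω | ε ≤ ∑ j, ((starRingEnd ℂ) (-(Complex.I * w j)) * u j ω).re}) :=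
        measure_mono hsub
    _ ≤ E0 + E0 + E0 + E0 := by
        refine le_trans (measure_union_le _ _) (add_le_add (le_trans (measure_union_le _ _)
          (add_le_add (le_trans (measure_union_le _ _) (add_le_add k1 k2)) k3)) k4)
    _ = ENNReal.ofReal (4 * Real.exp (-(t ^ 2) / (4 * σ2))) := by
        rw [hE0, ← ENNReal.ofReal_add (by positivity) (by positivity),
          ← ENNReal.ofReal_add (by positivity) (by positivity),
          ← ENNReal.ofReal_add (by positivity) (by positivity)]
        congr 1
        ring
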